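/- If a predicate φ : ℕ^k → {0,1} is semilinear (i.e., φ⁻¹(1) is a semilinear subset of ℕ^k) and densely almost constant, then φ is eventually constant. -/

import Mathlib

open Finset

/-- `c ∈ ℕ^k` is `α`-dense: every strictly positive coordinate is at least `α‖c‖`,
where `‖c‖` is the sum of the coordinates. -/
def AlphaDense {k : ℕ} (α : ℝ) (c : Fin k → ℕ) : Prop :=
  ∀ i, 0 < c i → α * (∑ j, (c j : ℝ)) ≤ (c i : ℝ)

/-- A periodic coset in `ℕ^k`:
`{ b + n1·p1 + ⋯ + nl·pl : n1, …, nl ∈ ℕ }`. -/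
def IsPeriodicCoset {k : ℕ} (P : Set (Fin k → ℕ)) : Prop :=
  ∃ (base : Fin k → ℕ) (l : ℕ) (per : Fin l → Fin k → ℕ),
    P = {x | ∃ n : Fin l → ℕ, x = base + ∑ i, n i • per i}

/-- A set is semilinear if it is a finite union of periodic cosets. -/
def Semilinear {k : ℕ} (S : Set (Fin k → ℕ)) : Prop :=
  ∃ (m : ℕ) (P : Fin m → Set (Fin k → ℕ)),
    (∀ j, IsPeriodicCoset (P j)) ∧ S = ⋃ j, P j

/-- `φ` is almost constant on `D`: `φ⁻¹(0) ∩ D` or `φ⁻¹(1) ∩ D` is finite. -/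
def AlmostConstantOn {k : ℕ} (φ : (Fin k → ℕ) → Bool) (D : Set (Fin k → ℕ)) : Prop :=
  {m ∈ D | φ m = false}.Finite ∨ {m ∈ D | φ m = true}.Finite

/-- `φ` is eventually constant: constant on `ℕ^k_{≥m0}` for some `m0`. -/
def EventuallyConstantPred {k : ℕ} (φ : (Fin k → ℕ) → Bool) : Prop :=
  ∃ m0 : ℕ, ∀ m m' : Fin k → ℕ, (∀ i, m0 ≤ m i) → (∀ i, m0 ≤ m' i) → φ m = φ m'


namespace SLP

variable {d : ℕ}

/-- linear inequality row: `∑ a i * x i ≤ c` -/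
abbrev Row (d : ℕ) := (Fin d → ℤ) × ℤ

def rhold (t : Row d) (x : Fin d → ℕ) : Prop := ∑ i, t.1 i * (x i : ℤ) ≤ t.2

/-- congruence atom : `D ∣ ∑ g i * x i - e` -/
structure CAtom (d : ℕ) where
  g : Fin d → ℤ
  e : ℤ
  D : ℕ

def chold (t : CAtom d) (x : Fin d → ℕ) : Prop :=
  (t.D : ℤ) ∣ (∑ i, t.g i * (x i : ℤ)) - t.e

structure Cell (d : ℕ) where
  ineqs : List (Row d)
  congs : List (CAtom d)

def Cell.Mem (Z : Cell d) (x : Fin d → ℕ) : Prop :=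
  (∀ t ∈ Z.ineqs, rhold t x) ∧ (∀ t ∈ Z.congs, chold t x)

def Cell.WF (Z : Cell d) : Prop := ∀ t ∈ Z.congs, 0 < t.D

abbrev CU (d : ℕ) := List (Cell d)

def CU.Mem (U : CU d) (x : Fin d → ℕ) : Prop := ∃ Z ∈ U, Z.Mem x
def CU.WF (U : CU d) : Prop := ∀ Z ∈ U, Z.WF

lemma CU.mem_append {U V : CU d} {x} : (U ++ V).Mem x ↔ U.Mem x ∨ V.Mem x := by
  constructor
  · rintro ⟨Z, hZ, hm⟩
    rcases List.mem_append.1 hZ with h | h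
    · exact Or.inl ⟨Z, h, hm⟩
    · exact Or.inr ⟨Z, h, hm⟩
  · rintro (⟨Z, h, hm⟩ | ⟨Z, h, hm⟩)
    · exact ⟨Z, List.mem_append.2 (Or.inl h), hm⟩
    · exact ⟨Z, List.mem_append.2 (Or.inr h), hm⟩

lemma CU.wf_append {U V : CU d} (hU : U.WF) (hV : V.WF) : (U ++ V).WF := by
  intro Z hZ
  rcases List.mem_append.1 hZ with h | h
  · exact hU Z h
  · exact hV Z h

def Cell.inter (Z W : Cell d) : Cell d := ⟨Z.ineqs ++ W.ineqs, Z.congs ++ W.congs⟩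

lemma Cell.inter_mem {Z W : Cell d} {x} : (Z.inter W).Mem x ↔ Z.Mem x ∧ W.Mem x := by
  unfold Cell.Mem Cell.inter
  simp only [List.mem_append]
  constructor
  · rintro ⟨h1, h2⟩
    exact ⟨⟨fun t ht => h1 t (Or.inl ht), fun t ht => h2 t (Or.inl ht)⟩,
      ⟨fun t ht => h1 t (Or.inr ht), fun t ht => h2 t (Or.inr ht)⟩⟩
  · rintro ⟨⟨a1, a2⟩, ⟨b1, b2⟩⟩
    exact ⟨fun t ht => ht.elim (a1 t) (b1 t), fun t ht => ht.elim (a2 t) (b2 t)⟩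

lemma Cell.inter_wf {Z W : Cell d} (hZ : Z.WF) (hW : W.WF) : (Z.inter W).WF := by
  intro t ht
  rcases List.mem_append.1 ht with h | h
  · exact hZ t h
  · exact hW t h

def CU.inter (U V : CU d) : CU d := U.flatMap (fun Z => V.map (fun W => Z.inter W))

lemma CU.inter_mem {U V : CU d} {x} : (U.inter V).Mem x ↔ U.Mem x ∧ V.Mem x := by
  unfold CU.inter CU.Mem
  constructor
  · rintro ⟨C, hC, hm⟩
    rcases List.mem_flatMap.1 hC with ⟨Z, hZ, hC2⟩
    rcases List.mem_map.1 hC2 with ⟨W, hW, rfl⟩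
    rw [Cell.inter_mem] at hm
    exact ⟨⟨Z, hZ, hm.1⟩, ⟨W, hW, hm.2⟩⟩
  · rintro ⟨⟨Z, hZ, hmZ⟩, ⟨W, hW, hmW⟩⟩
    exact ⟨Z.inter W, List.mem_flatMap.2 ⟨Z, hZ, List.mem_map.2 ⟨W, hW, rfl⟩⟩,
      Cell.inter_mem.2 ⟨hmZ, hmW⟩⟩

lemma CU.inter_wf {U V : CU d} (hU : U.WF) (hV : V.WF) : (U.inter V).WF := by
  intro C hC
  rcases List.mem_flatMap.1 hC with ⟨Z, hZ, hC2⟩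
  rcases List.mem_map.1 hC2 with ⟨W, hW, rfl⟩
  exact Cell.inter_wf (hU Z hZ) (hV W hW)

/-- negation of an inequality row -/
lemma not_rhold_iff {t : Row d} {x} :
    ¬ rhold t x ↔ rhold (fun i => -(t.1 i), -t.2 - 1) x := by
  unfold rhold
  have h : ∑ i : Fin d, -(t.1 i) * ((x i : ℤ)) = -∑ i : Fin d, t.1 i * (x i : ℤ) := by
    rw [← Finset.sum_neg_distrib]
    exact Finset.sum_congr rfl (fun i _ => by ring)
  constructor
  · intro hn; simp only [h]; omega
  · intro hn; simp only [h] at hn; omega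

/-- negation of a congruence atom -/
lemma not_chold_iff {t : CAtom d} (hD : 0 < t.D) {x} :
    ¬ chold t x ↔ ∃ j : ℕ, 1 ≤ j ∧ j < t.D ∧ chold ⟨t.g, t.e + j, t.D⟩ x := by
  unfold chold
  constructor
  · intro h
    set s := (∑ i, t.g i * (x i : ℤ)) - t.e with hs
    have hD' : (t.D : ℤ) ≠ 0 := by exact_mod_cast hD.ne'
    have h0 : 0 ≤ s % t.D := Int.emod_nonneg s hD'
    have h1 : s % t.D < t.D := Int.emod_lt_of_pos s (by exact_mod_cast hD)
    have hne : s % t.D ≠ 0 := by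
      intro hz
      exact h (Int.dvd_iff_emod_eq_zero.2 hz)
    refine ⟨(s % t.D).toNat, ?_, ?_, ?_⟩
    · omega
    · omega
    · have : ((s % t.D).toNat : ℤ) = s % t.D := Int.toNat_of_nonneg h0
      simp only [this]
      have heq : (∑ i, t.g i * (x i : ℤ)) - (t.e + s % t.D) = s - s % t.D := by
        rw [hs]; ring
      rw [heq]
      have := Int.mul_ediv_add_emod s (t.D : ℤ)
      exact ⟨s / t.D, by omega⟩
  · rintro ⟨j, hj1, hj2, hdvd⟩ hdvd2
    have : (t.D : ℤ) ∣ (j : ℤ) := by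
      have h1 : (∑ i, t.g i * (x i : ℤ)) - t.e - ((∑ i, t.g i * (x i : ℤ)) - (t.e + j)) = j := by
        ring
      have := dvd_sub hdvd2 hdvd
      rwa [h1] at this
    have := Int.le_of_dvd (by exact_mod_cast hj1) this
    omega

def Cell.compl (Z : Cell d) : CU d :=
  Z.ineqs.map (fun t => ⟨[(fun i => -(t.1 i), -t.2 - 1)], []⟩)
  ++ Z.congs.flatMap (fun t =>
      ((List.range t.D).filter (fun j => decide (1 ≤ j))).map
        (fun j => ⟨[], [⟨t.g, t.e + j, t.D⟩]⟩))

lemma Cell.compl_wf {Z : Cell d} (h : Z.WF) : (Z.compl).WF := by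
  intro C hC
  rcases List.mem_append.1 hC with h1 | h1
  · rcases List.mem_map.1 h1 with ⟨t, _, rfl⟩
    intro a ha
    simp at ha
  · rcases List.mem_flatMap.1 h1 with ⟨t, ht, h2⟩
    rcases List.mem_map.1 h2 with ⟨j, _, rfl⟩
    intro a ha
    simp only [List.mem_singleton] at ha
    subst ha
    exact h t ht

lemma Cell.compl_mem {Z : Cell d} (hwf : Z.WF) {x} : (Z.compl).Mem x ↔ ¬ Z.Mem x := by
  constructor
  · rintro ⟨C, hC, hm⟩ hZ
    rcases List.mem_append.1 hC with h1 | h1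
    · rcases List.mem_map.1 h1 with ⟨t, ht, rfl⟩
      have := hm.1 _ (List.mem_singleton.2 rfl)
      exact (not_rhold_iff.2 this) (hZ.1 t ht)
    · rcases List.mem_flatMap.1 h1 with ⟨t, ht, h2⟩
      rcases List.mem_map.1 h2 with ⟨j, hj, rfl⟩
      have hj' := List.mem_filter.1 hj
      have hjr : j < t.D := List.mem_range.1 hj'.1
      have hj1 : 1 ≤ j := by
        have := hj'.2; simpa using this
      have hch := hm.2 _ (List.mem_singleton.2 rfl)
      have : ¬ chold t x := (not_chold_iff (hwf t ht)).2 ⟨j, hj1, hjr, hch⟩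
      exact this (hZ.2 t ht)
  · intro h
    unfold Cell.Mem at h
    push_neg at h
    by_cases h1 : ∀ t ∈ Z.ineqs, rhold t x
    · rcases h h1 with ⟨t, ht, hnc⟩
      rcases (not_chold_iff (hwf t ht)).1 hnc with ⟨j, hj1, hj2, hch⟩
      refine ⟨⟨[], [⟨t.g, t.e + j, t.D⟩]⟩, ?_, ?_⟩
      · refine List.mem_append.2 (Or.inr (List.mem_flatMap.2 ⟨t, ht, List.mem_map.2 ⟨j, ?_, rfl⟩⟩))
        refine List.mem_filter.2 ⟨List.mem_range.2 hj2, by simpa using hj1⟩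
      · exact ⟨by simp, fun a ha => by
          simp only [List.mem_singleton] at ha; subst ha; exact hch⟩
    · push_neg at h1
      rcases h1 with ⟨t, ht, hnr⟩
      refine ⟨⟨[(fun i => -(t.1 i), -t.2 - 1)], []⟩,
        List.mem_append.2 (Or.inl (List.mem_map.2 ⟨t, ht, rfl⟩)), ?_, by simp⟩
      intro a ha
      simp only [List.mem_singleton] at ha
      subst ha
      exact not_rhold_iff.1 hnr

def CU.full : CU d := [⟨[], []⟩]

lemma CU.full_mem {x : Fin d → ℕ} : (CU.full).Mem x := ⟨⟨[], []⟩, by simp [CU.full], by simp [Cell.Mem]⟩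

def CU.compl (U : CU d) : CU d := U.foldr (fun Z acc => CU.inter (Z.compl) acc) CU.full

lemma CU.compl_wf {U : CU d} (h : U.WF) : (U.compl).WF := by
  induction U with
  | nil => intro Z hZ; simp only [CU.compl, List.foldr_nil, CU.full] at hZ;
           rcases List.mem_singleton.1 hZ with rfl; intro t ht; simp at ht
  | cons Z U ih =>
      have hZ : Z.WF := h Z (List.mem_cons_self)
      have hU : CU.WF U := fun W hW => h W (List.mem_cons_of_mem _ hW)
      exact CU.inter_wf (Cell.compl_wf hZ) (ih hU)

lemma CU.compl_mem {U : CU d} (h : U.WF) {x} : (U.compl).Mem x ↔ ¬ U.Mem x := by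
  induction U with
  | nil =>
      simp only [CU.compl, List.foldr_nil]
      constructor
      · rintro - ⟨Z, hZ, -⟩; simp at hZ
      · intro _; exact CU.full_mem
  | cons Z U ih =>
      have hZ : Z.WF := h Z (List.mem_cons_self)
      have hU : CU.WF U := fun W hW => h W (List.mem_cons_of_mem _ hW)
      simp only [CU.compl, List.foldr_cons]
      rw [show (List.foldr (fun Z acc => CU.inter (Z.compl) acc) CU.full U) = CU.compl U from rfl]
      rw [CU.inter_mem, Cell.compl_mem hZ, ih hU]
      constructor
      · rintro ⟨h1, h2⟩ ⟨W, hW, hm⟩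
        rcases List.mem_cons.1 hW with rfl | hW'
        · exact h1 hm
        · exact h2 ⟨W, hW', hm⟩
      · intro hn
        constructor
        · intro hm; exact hn ⟨Z, List.mem_cons_self, hm⟩
        · rintro ⟨W, hW, hm⟩; exact hn ⟨W, List.mem_cons_of_mem _ hW, hm⟩


/- helpers -/
lemma dvd_foldr_lcm {l : List ℕ} {a : ℕ} (h : a ∈ l) : a ∣ l.foldr Nat.lcm 1 := by
  induction l with
  | nil => simp at h
  | cons b l ih =>
    rcases List.mem_cons.1 h with rfl | h
    · exact Nat.dvd_lcm_left _ _
    · exact (ih h).trans (Nat.dvd_lcm_right _ _)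

lemma foldr_lcm_pos {l : List ℕ} (h : ∀ a ∈ l, 0 < a) : 0 < l.foldr Nat.lcm 1 := by
  induction l with
  | nil => simp
  | cons b l ih =>
    exact Nat.lcm_pos (h b (List.mem_cons_self))
      (ih (fun a ha => h a (List.mem_cons_of_mem _ ha)))

lemma exists_list_max {β : Type*} (l : List β) (f : β → ℤ) (h : l ≠ []) :
    ∃ b ∈ l, ∀ a ∈ l, f a ≤ f b := by
  induction l with
  | nil => simp at h
  | cons b l ih =>
    rcases eq_or_ne l [] with rfl | hl
    · exact ⟨b, List.mem_cons_self, by simp⟩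
    · rcases ih hl with ⟨m, hm, hmax⟩
      rcases le_total (f b) (f m) with hc | hc
      · refine ⟨m, List.mem_cons_of_mem _ hm, ?_⟩
        intro a ha
        rcases List.mem_cons.1 ha with rfl | ha
        · exact hc
        · exact hmax a ha
      · refine ⟨b, List.mem_cons_self, ?_⟩
        intro a ha
        rcases List.mem_cons.1 ha with rfl | ha
        · exact le_refl _
        · exact (hmax a ha).trans hc

/- ===== Cooper section ===== -/

def aeval (f : (Fin d → ℤ) × ℤ) (x : Fin d → ℕ) : ℤ := (∑ i, f.1 i * (x i : ℤ)) + f.2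

structure MAtom (d : ℕ) where
  h : ℤ
  g : Fin d → ℤ
  e : ℤ
  D : ℕ

def mhold (m : MAtom d) (x : Fin d → ℕ) (M : ℤ) : Prop :=
  (m.D : ℤ) ∣ m.h * M + (∑ i, m.g i * (x i : ℤ)) - m.e

variable (Z : Cell (d+1))

def lastc (t : Row (d+1)) : ℤ := t.1 (Fin.last d)

def Amul : ℕ := (Z.ineqs.map (fun t => max 1 (lastc t).natAbs)).foldr Nat.lcm 1

lemma Amul_pos : 0 < Amul Z := by
  apply foldr_lcm_pos
  intro a ha
  rcases List.mem_map.1 ha with ⟨t, _, rfl⟩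
  exact lt_of_lt_of_le one_pos (le_max_left _ _)

lemma natAbs_dvd_Amul {t : Row (d+1)} (ht : t ∈ Z.ineqs) (h0 : lastc t ≠ 0) :
    (lastc t).natAbs ∣ Amul Z := by
  have h1 : max 1 (lastc t).natAbs = (lastc t).natAbs := by
    have := Int.natAbs_pos.2 h0; omega
  have : (lastc t).natAbs ∈ Z.ineqs.map (fun t => max 1 (lastc t).natAbs) := by
    rw [← h1]; exact List.mem_map.2 ⟨t, ht, rfl⟩
  exact dvd_foldr_lcm this

def sfac (t : Row (d+1)) : ℕ := Amul Z / (lastc t).natAbs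

lemma sfac_mul {t : Row (d+1)} (ht : t ∈ Z.ineqs) (h0 : lastc t ≠ 0) :
    (sfac Z t) * (lastc t).natAbs = Amul Z :=
  Nat.div_mul_cancel (natAbs_dvd_Amul Z ht h0)

lemma sfac_pos {t : Row (d+1)} (ht : t ∈ Z.ineqs) (h0 : lastc t ≠ 0) : 0 < sfac Z t :=
  Nat.div_pos (Nat.le_of_dvd (Amul_pos Z) (natAbs_dvd_Amul Z ht h0)) (Int.natAbs_pos.2 h0)

def lowForm (t : Row (d+1)) : (Fin d → ℤ) × ℤ :=
  (fun i => (sfac Z t : ℤ) * t.1 i.castSucc, -((sfac Z t : ℤ) * t.2))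

def upForm (t : Row (d+1)) : (Fin d → ℤ) × ℤ :=
  (fun i => -((sfac Z t : ℤ) * t.1 i.castSucc), (sfac Z t : ℤ) * t.2)

def lows : List ((Fin d → ℤ) × ℤ) :=
  (fun _ => 0, 0) :: Z.ineqs.filterMap (fun t => if lastc t < 0 then some (lowForm Z t) else none)

def ups : List ((Fin d → ℤ) × ℤ) :=
  Z.ineqs.filterMap (fun t => if 0 < lastc t then some (upForm Z t) else none)

def pures : List (Row d) :=
  Z.ineqs.filterMap (fun t => if lastc t = 0 then some (fun i => t.1 i.castSucc, t.2) else none)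

def mats : List (MAtom d) :=
  ⟨1, fun _ => 0, 0, Amul Z⟩ ::
    Z.congs.map (fun t => ⟨t.g (Fin.last d), fun i => (Amul Z : ℤ) * t.g i.castSucc,
      (Amul Z : ℤ) * t.e, Amul Z * t.D⟩)

def Lam : ℕ := ((mats Z).map (fun m => m.D)).foldr Nat.lcm 1

lemma Lam_pos (hwf : Z.WF) : 0 < Lam Z := by
  apply foldr_lcm_pos
  intro a ha
  rcases List.mem_map.1 ha with ⟨m, hm, rfl⟩
  rcases List.mem_cons.1 hm with rfl | hm
  · exact Amul_pos Z
  · rcases List.mem_map.1 hm with ⟨t, ht, rfl⟩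
    exact Nat.mul_pos (Amul_pos Z) (hwf t ht)

def P1 (x : Fin d → ℕ) (M : ℤ) : Prop :=
  (∀ v ∈ lows Z, aeval v x ≤ M) ∧ (∀ u ∈ ups Z, M ≤ aeval u x) ∧
  (∀ m ∈ mats Z, mhold m x M) ∧ (∀ t ∈ pures Z, rhold t x)

lemma snoc_sum (f : Fin (d+1) → ℤ) (x : Fin d → ℕ) (y : ℕ) :
    (∑ i : Fin (d+1), f i * ((Fin.snoc x y : Fin (d+1) → ℕ) i : ℤ))
      = (∑ i : Fin d, f i.castSucc * (x i : ℤ)) + f (Fin.last d) * (y : ℤ) := by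
  rw [Fin.sum_univ_castSucc]
  congr 1
  · apply Finset.sum_congr rfl
    intro i _
    rw [show (Fin.snoc x y : Fin (d+1) → ℕ) i.castSucc = x i from Fin.snoc_castSucc _ _ _]
  · rw [show (Fin.snoc x y : Fin (d+1) → ℕ) (Fin.last d) = y from Fin.snoc_last _ _]

lemma aeval_lowForm (t : Row (d+1)) (x : Fin d → ℕ) :
    aeval (lowForm Z t) x = (sfac Z t : ℤ) * ((∑ i : Fin d, t.1 i.castSucc * (x i : ℤ)) - t.2) := by
  unfold aeval lowForm
  simp only [mul_sub, Finset.mul_sum]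
  have : ∀ i : Fin d, (sfac Z t : ℤ) * t.1 i.castSucc * (x i : ℤ)
      = (sfac Z t : ℤ) * (t.1 i.castSucc * (x i : ℤ)) := fun i => by ring
  rw [Finset.sum_congr rfl (fun i _ => this i)]
  ring

lemma aeval_upForm (t : Row (d+1)) (x : Fin d → ℕ) :
    aeval (upForm Z t) x = (sfac Z t : ℤ) * (t.2 - (∑ i : Fin d, t.1 i.castSucc * (x i : ℤ))) := by
  unfold aeval upForm
  simp only [mul_sub, Finset.mul_sum]
  have : ∀ i : Fin d, -((sfac Z t : ℤ) * t.1 i.castSucc) * (x i : ℤ)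
      = -((sfac Z t : ℤ) * (t.1 i.castSucc * (x i : ℤ))) := fun i => by ring
  rw [Finset.sum_congr rfl (fun i _ => this i)]
  rw [Finset.sum_neg_distrib]
  ring

lemma ineq_neg_iff {t : Row (d+1)} (ht : t ∈ Z.ineqs) (hn : lastc t < 0) (x : Fin d → ℕ) (y : ℕ) :
    rhold t (Fin.snoc x y) ↔ aeval (lowForm Z t) x ≤ (Amul Z : ℤ) * y := by
  unfold rhold
  rw [snoc_sum, aeval_lowForm]
  have hs : (0:ℤ) < (sfac Z t : ℤ) := by exact_mod_cast sfac_pos Z ht hn.ne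
  have habs : ((lastc t).natAbs : ℤ) = -(lastc t) := by omega
  have hA : (Amul Z : ℤ) = (sfac Z t : ℤ) * (-(lastc t)) := by
    rw [← habs]
    exact_mod_cast (sfac_mul Z ht hn.ne).symm
  rw [hA]
  have : (sfac Z t : ℤ) * -lastc t * (y:ℤ) = (sfac Z t : ℤ) * (-(lastc t * y)) := by ring
  rw [this, mul_le_mul_iff_of_pos_left hs]
  have hl : t.1 (Fin.last d) = lastc t := rfl
  rw [hl]
  constructor <;> intro h <;> omega

lemma ineq_pos_iff {t : Row (d+1)} (ht : t ∈ Z.ineqs) (hp : 0 < lastc t) (x : Fin d → ℕ) (y : ℕ) :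
    rhold t (Fin.snoc x y) ↔ (Amul Z : ℤ) * y ≤ aeval (upForm Z t) x := by
  unfold rhold
  rw [snoc_sum, aeval_upForm]
  have hs : (0:ℤ) < (sfac Z t : ℤ) := by exact_mod_cast sfac_pos Z ht hp.ne'
  have habs : ((lastc t).natAbs : ℤ) = lastc t := by omega
  have hA : (Amul Z : ℤ) = (sfac Z t : ℤ) * lastc t := by
    rw [← habs]
    exact_mod_cast (sfac_mul Z ht hp.ne').symm
  rw [hA]
  have : (sfac Z t : ℤ) * lastc t * (y:ℤ) = (sfac Z t : ℤ) * (lastc t * y) := by ring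
  rw [this, mul_le_mul_iff_of_pos_left hs]
  have hl : t.1 (Fin.last d) = lastc t := rfl
  rw [hl]
  constructor <;> intro h <;> omega

lemma ineq_zero_iff {t : Row (d+1)} (hz : lastc t = 0) (x : Fin d → ℕ) (y : ℕ) :
    rhold t (Fin.snoc x y) ↔ rhold (fun i => t.1 i.castSucc, t.2) x := by
  unfold rhold
  rw [snoc_sum]
  rw [show t.1 (Fin.last d) = lastc t from rfl, hz]
  simp

lemma cong_iff {t : CAtom (d+1)} (hA : 0 < Amul Z) (x : Fin d → ℕ) (y : ℕ) :
    chold t (Fin.snoc x y) ↔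
      mhold ⟨t.g (Fin.last d), fun i => (Amul Z : ℤ) * t.g i.castSucc,
        (Amul Z : ℤ) * t.e, Amul Z * t.D⟩ x ((Amul Z : ℤ) * y) := by
  unfold chold mhold
  rw [snoc_sum]
  have hAz : (Amul Z : ℤ) ≠ 0 := by exact_mod_cast hA.ne'
  have hsum : (∑ i : Fin d, ((Amul Z : ℤ) * t.g i.castSucc) * (x i : ℤ))
      = (Amul Z : ℤ) * (∑ i : Fin d, t.g i.castSucc * (x i : ℤ)) := by
    rw [Finset.mul_sum]
    exact Finset.sum_congr rfl (fun i _ => by ring)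
  simp only [hsum]
  push_cast
  constructor
  · rintro ⟨c, hc⟩
    exact ⟨c, by linear_combination (Amul Z : ℤ) * hc⟩
  · rintro ⟨c, hc⟩
    refine ⟨c, ?_⟩
    have h2 : (Amul Z:ℤ) * ((∑ i : Fin d, t.g i.castSucc * (x i:ℤ)) + t.g (Fin.last d) * y - t.e)
        = (Amul Z:ℤ) * ((t.D:ℤ) * c) := by linear_combination hc
    exact mul_left_cancel₀ hAz h2






variable {d : ℕ} (Z : Cell (d+1))

lemma exists_y_iff (hwf : Z.WF) (x : Fin d → ℕ) :
    (∃ y : ℕ, Z.Mem (Fin.snoc x y)) ↔ ∃ M : ℤ, P1 Z x M := by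
  constructor
  · rintro ⟨y, hy⟩
    refine ⟨(Amul Z : ℤ) * y, ?_, ?_, ?_, ?_⟩
    · intro v hv
      rcases List.mem_cons.1 hv with rfl | hv
      · unfold aeval
        simp only [zero_mul, Finset.sum_const_zero, add_zero]
        positivity
      · rcases List.mem_filterMap.1 hv with ⟨t, ht, hsome⟩
        by_cases hn : lastc t < 0
        · rw [if_pos hn] at hsome
          cases hsome
          exact (ineq_neg_iff Z ht hn x y).1 (hy.1 t ht)
        · rw [if_neg hn] at hsome; cases hsome
    · intro u hu
      rcases List.mem_filterMap.1 hu with ⟨t, ht, hsome⟩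
      by_cases hp : 0 < lastc t
      · rw [if_pos hp] at hsome
        cases hsome
        exact (ineq_pos_iff Z ht hp x y).1 (hy.1 t ht)
      · rw [if_neg hp] at hsome; cases hsome
    · intro m hm
      rcases List.mem_cons.1 hm with rfl | hm
      · unfold mhold
        simp only [one_mul, zero_mul, Finset.sum_const_zero, add_zero, sub_zero]
        exact Dvd.intro _ rfl
      · rcases List.mem_map.1 hm with ⟨t, ht, rfl⟩
        exact (cong_iff Z (Amul_pos Z) x y).1 (hy.2 t ht)
    · intro t' ht'
      rcases List.mem_filterMap.1 ht' with ⟨t, ht, hsome⟩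
      by_cases hz : lastc t = 0
      · rw [if_pos hz] at hsome
        cases hsome
        exact (ineq_zero_iff hz x y).1 (hy.1 t ht)
      · rw [if_neg hz] at hsome; cases hsome
  · rintro ⟨M, h1, h2, h3, h4⟩
    have hA : (0:ℤ) < (Amul Z : ℤ) := by exact_mod_cast Amul_pos Z
    have hM0 : 0 ≤ M := by
      have := h1 _ (List.mem_cons_self)
      unfold aeval at this
      simpa using this
    have hdvd : (Amul Z : ℤ) ∣ M := by
      have := h3 _ (List.mem_cons_self)
      unfold mhold at this
      simpa using this
    set y : ℕ := (M / (Amul Z : ℤ)).toNat with hy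
    have hyM : (Amul Z : ℤ) * y = M := by
      have hq : 0 ≤ M / (Amul Z : ℤ) := Int.ediv_nonneg hM0 hA.le
      rw [hy, Int.toNat_of_nonneg hq, mul_comm]
      exact Int.ediv_mul_cancel hdvd
    refine ⟨y, ⟨?_, ?_⟩⟩
    · intro t ht
      rcases lt_trichotomy (lastc t) 0 with hn | hz | hp
      · apply (ineq_neg_iff Z ht hn x y).2
        rw [hyM]
        exact h1 _ (List.mem_cons_of_mem _ (List.mem_filterMap.2 ⟨t, ht, by rw [if_pos hn]⟩))
      · apply (ineq_zero_iff hz x y).2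
        exact h4 _ (List.mem_filterMap.2 ⟨t, ht, by rw [if_pos hz]⟩)
      · apply (ineq_pos_iff Z ht hp x y).2
        rw [hyM]
        exact h2 _ (List.mem_filterMap.2 ⟨t, ht, by rw [if_pos hp]⟩)
    · intro t ht
      apply (cong_iff Z (Amul_pos Z) x y).2
      rw [hyM]
      exact h3 _ (List.mem_cons_of_mem _ (List.mem_map.2 ⟨t, ht, rfl⟩))

def buildCell (v : (Fin d → ℤ) × ℤ) (j : ℕ) : Cell d :=
  ⟨pures Z
    ++ (lows Z).map (fun w => (fun i => w.1 i - v.1 i, (j:ℤ) + v.2 - w.2))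
    ++ (ups Z).map (fun u => (fun i => v.1 i - u.1 i, u.2 - v.2 - (j:ℤ))),
   (mats Z).map (fun m => ⟨fun i => m.h * v.1 i + m.g i, m.e - m.h * (v.2 + (j:ℤ)), m.D⟩)⟩

lemma mats_D_pos (hwf : Z.WF) : ∀ m ∈ mats Z, 0 < m.D := by
  intro m hm
  rcases List.mem_cons.1 hm with rfl | hm
  · exact Amul_pos Z
  · rcases List.mem_map.1 hm with ⟨c, hc, rfl⟩
    exact Nat.mul_pos (Amul_pos Z) (hwf c hc)

lemma buildCell_wf (hwf : Z.WF) (v : (Fin d → ℤ) × ℤ) (j : ℕ) : (buildCell Z v j).WF := by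
  intro t ht
  rcases List.mem_map.1 ht with ⟨m, hm, rfl⟩
  exact mats_D_pos Z hwf m hm

lemma low_row_iff (v w : (Fin d → ℤ) × ℤ) (j : ℕ) (x : Fin d → ℕ) :
    rhold (fun i => w.1 i - v.1 i, (j:ℤ) + v.2 - w.2) x ↔ aeval w x ≤ aeval v x + j := by
  unfold rhold aeval
  have hs : ∑ i, (w.1 i - v.1 i) * (x i:ℤ)
      = (∑ i, w.1 i * (x i:ℤ)) - ∑ i, v.1 i * (x i:ℤ) := by
    rw [← Finset.sum_sub_distrib]
    exact Finset.sum_congr rfl fun i _ => by ring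
  rw [hs]
  constructor <;> intro <;> omega

lemma up_row_iff (v u : (Fin d → ℤ) × ℤ) (j : ℕ) (x : Fin d → ℕ) :
    rhold (fun i => v.1 i - u.1 i, u.2 - v.2 - (j:ℤ)) x ↔ aeval v x + j ≤ aeval u x := by
  unfold rhold aeval
  have hs : ∑ i, (v.1 i - u.1 i) * (x i:ℤ)
      = (∑ i, v.1 i * (x i:ℤ)) - ∑ i, u.1 i * (x i:ℤ) := by
    rw [← Finset.sum_sub_distrib]
    exact Finset.sum_congr rfl fun i _ => by ring
  rw [hs]
  constructor <;> intro <;> omega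

lemma mat_row_iff (v : (Fin d → ℤ) × ℤ) (m : MAtom d) (j : ℕ) (x : Fin d → ℕ) :
    chold ⟨fun i => m.h * v.1 i + m.g i, m.e - m.h * (v.2 + (j:ℤ)), m.D⟩ x
      ↔ mhold m x (aeval v x + j) := by
  unfold chold mhold aeval
  have hs : ∑ i, (m.h * v.1 i + m.g i) * (x i:ℤ)
      = m.h * (∑ i, v.1 i * (x i:ℤ)) + ∑ i, m.g i * (x i:ℤ) := by
    have hterm : ∀ i : Fin d, (m.h * v.1 i + m.g i) * (x i:ℤ)
        = m.h * (v.1 i * (x i:ℤ)) + m.g i * (x i:ℤ) := fun i => by ring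
    rw [Finset.sum_congr rfl (fun i _ => hterm i), Finset.sum_add_distrib, Finset.mul_sum]
  rw [hs]
  have heq : m.h * (∑ i, v.1 i * (x i:ℤ)) + (∑ i, m.g i * (x i:ℤ)) - (m.e - m.h * (v.2 + (j:ℤ)))
      = m.h * ((∑ i, v.1 i * (x i:ℤ)) + v.2 + (j:ℤ)) + (∑ i, m.g i * (x i:ℤ)) - m.e := by ring
  rw [heq]

lemma buildCell_mem (v : (Fin d → ℤ) × ℤ) (j : ℕ) (x : Fin d → ℕ) :
    (buildCell Z v j).Mem x ↔ P1 Z x (aeval v x + j) := by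
  unfold Cell.Mem buildCell P1
  simp only [List.mem_append]
  constructor
  · rintro ⟨hi, hc⟩
    refine ⟨?_, ?_, ?_, ?_⟩
    · intro w hw
      exact (low_row_iff v w j x).1 (hi _ (Or.inl (Or.inr (List.mem_map.2 ⟨w, hw, rfl⟩))))
    · intro u hu
      exact (up_row_iff v u j x).1 (hi _ (Or.inr (List.mem_map.2 ⟨u, hu, rfl⟩)))
    · intro m hm
      exact (mat_row_iff v m j x).1 (hc _ (List.mem_map.2 ⟨m, hm, rfl⟩))
    · intro t ht
      exact hi _ (Or.inl (Or.inl ht))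
  · rintro ⟨h1, h2, h3, h4⟩
    constructor
    · intro t ht
      rcases ht with (ht | ht) | ht
      · exact h4 t ht
      · rcases List.mem_map.1 ht with ⟨w, hw, rfl⟩
        exact (low_row_iff v w j x).2 (h1 w hw)
      · rcases List.mem_map.1 ht with ⟨u, hu, rfl⟩
        exact (up_row_iff v u j x).2 (h2 u hu)
    · intro t ht
      rcases List.mem_map.1 ht with ⟨m, hm, rfl⟩
      exact (mat_row_iff v m j x).2 (h3 m hm)

lemma P1_shift_iff (hwf : Z.WF) (x : Fin d → ℕ) :
    (∃ M : ℤ, P1 Z x M) ↔ ∃ v ∈ lows Z, ∃ j < Lam Z, P1 Z x (aeval v x + j) := by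
  constructor
  · rintro ⟨M, h1, h2, h3, h4⟩
    obtain ⟨v, hv, hvmax⟩ := exists_list_max (lows Z) (fun w => aeval w x) (by
      unfold lows; exact List.cons_ne_nil _ _)
    have hL : (0:ℤ) < (Lam Z : ℤ) := by exact_mod_cast Lam_pos Z hwf
    have hvM : aeval v x ≤ M := h1 v hv
    set r : ℤ := (M - aeval v x) % (Lam Z : ℤ) with hr
    have hr0 : 0 ≤ r := Int.emod_nonneg _ hL.ne'
    have hrL : r < (Lam Z : ℤ) := Int.emod_lt_of_pos _ hL
    have hdm := Int.mul_ediv_add_emod (M - aeval v x) (Lam Z : ℤ)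
    have hqnn : 0 ≤ (M - aeval v x) / (Lam Z : ℤ) := Int.ediv_nonneg (by omega) hL.le
    have hqq : 0 ≤ (Lam Z : ℤ) * ((M - aeval v x) / (Lam Z : ℤ)) := mul_nonneg hL.le hqnn
    set j : ℕ := r.toNat with hj
    have hjr : (j : ℤ) = r := Int.toNat_of_nonneg hr0
    have hjL : j < Lam Z := by omega
    set M' : ℤ := aeval v x + j with hM'
    have hM'le : M' ≤ M := by omega
    have hdvdMM' : (Lam Z : ℤ) ∣ M - M' := by
      refine ⟨(M - aeval v x) / (Lam Z : ℤ), ?_⟩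
      omega
    refine ⟨v, hv, j, hjL, ?_, ?_, ?_, h4⟩
    · intro w hw
      have := hvmax w hw
      omega
    · intro u hu
      have := h2 u hu
      omega
    · intro m hm
      have hDl : (m.D : ℤ) ∣ (Lam Z : ℤ) := by
        exact_mod_cast dvd_foldr_lcm (List.mem_map.2 ⟨m, hm, rfl⟩)
      have h0 := h3 m hm
      unfold mhold at h0 ⊢
      have key : m.h * M' + (∑ i, m.g i * (x i:ℤ)) - m.e
          = (m.h * M + (∑ i, m.g i * (x i:ℤ)) - m.e) - m.h * (M - M') := by ring
      rw [key]
      exact dvd_sub h0 (Dvd.dvd.mul_left (hDl.trans hdvdMM') m.h)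
  · rintro ⟨v, hv, j, hj, h⟩
    exact ⟨aeval v x + j, h⟩

theorem cooper (hwf : Z.WF) :
    ∃ U : CU d, U.WF ∧ ∀ x : Fin d → ℕ, CU.Mem U x ↔ ∃ y : ℕ, Z.Mem (Fin.snoc x y) := by
  refine ⟨(lows Z).flatMap (fun v => (List.range (Lam Z)).map (fun j => buildCell Z v j)), ?_, ?_⟩
  · intro C hC
    rcases List.mem_flatMap.1 hC with ⟨v, hv, hC2⟩
    rcases List.mem_map.1 hC2 with ⟨j, hjm, rfl⟩
    exact buildCell_wf Z hwf v j
  · intro x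
    rw [exists_y_iff Z hwf x, P1_shift_iff Z hwf x]
    constructor
    · rintro ⟨C, hC, hm⟩
      rcases List.mem_flatMap.1 hC with ⟨v, hv, hC2⟩
      rcases List.mem_map.1 hC2 with ⟨j, hjm, rfl⟩
      exact ⟨v, hv, j, List.mem_range.1 hjm, (buildCell_mem Z v j x).1 hm⟩
    · rintro ⟨v, hv, j, hj, h⟩
      exact ⟨buildCell Z v j, List.mem_flatMap.2 ⟨v, hv, List.mem_map.2 ⟨j, List.mem_range.2 hj, rfl⟩⟩,
        (buildCell_mem Z v j x).2 h⟩



abbrev QRow (d : ℕ) := (Fin d → ℚ) × ℚ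
def qeval (f : QRow d) (x : Fin d → ℚ) : ℚ := ∑ i, f.1 i * x i
def gholds (S : List (QRow d)) (x : Fin d → ℚ) (t : ℚ) : Prop :=
  ∀ r ∈ S, qeval r x ≤ r.2 * t

def qtail (f : QRow (d+1)) : QRow d := (fun i => f.1 i.succ, f.2)

lemma qeval_cons (f : QRow (d+1)) (x : Fin d → ℚ) (y : ℚ) :
    qeval f (Fin.cons y x) = f.1 0 * y + qeval (qtail f) x := by
  unfold qeval qtail
  rw [Fin.sum_univ_succ]
  simp [Fin.cons_succ]

def FMstep (S : List (QRow (d+1))) : List (QRow d) :=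
  (S.filterMap fun r => if r.1 0 = 0 then some (qtail r) else none)
  ++ (S.flatMap fun r => S.filterMap fun s =>
      if 0 < r.1 0 ∧ s.1 0 < 0 then
        some (fun i => r.1 0 * s.1 i.succ + (-(s.1 0)) * r.1 i.succ,
              r.1 0 * s.2 + (-(s.1 0)) * r.2)
      else none)

lemma combo_eval (r s : QRow (d+1)) (x : Fin d → ℚ) :
    qeval (fun i => r.1 0 * s.1 i.succ + (-(s.1 0)) * r.1 i.succ,
           r.1 0 * s.2 + (-(s.1 0)) * r.2) x
      = r.1 0 * qeval (qtail s) x + (-(s.1 0)) * qeval (qtail r) x := by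
  unfold qeval qtail
  simp only
  rw [Finset.mul_sum, Finset.mul_sum, ← Finset.sum_add_distrib]
  exact Finset.sum_congr rfl fun i _ => by ring

lemma fm_sound {S : List (QRow (d+1))} {x : Fin d → ℚ} {y t : ℚ}
    (h : gholds S (Fin.cons y x) t) : gholds (FMstep S) x t := by
  intro w hw
  rcases List.mem_append.1 hw with h1 | h1
  · rcases List.mem_filterMap.1 h1 with ⟨r, hr, hsome⟩
    by_cases hz : r.1 0 = 0
    · rw [if_pos hz] at hsome
      cases hsome
      have := h r hr
      rw [qeval_cons, hz] at this
      simpa [qtail] using this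
    · rw [if_neg hz] at hsome; cases hsome
  · rcases List.mem_flatMap.1 h1 with ⟨r, hr, h2⟩
    rcases List.mem_filterMap.1 h2 with ⟨s, hs, hsome⟩
    by_cases hc : 0 < r.1 0 ∧ s.1 0 < 0
    · rw [if_pos hc] at hsome
      cases hsome
      obtain ⟨ha, hb⟩ := hc
      have hrr := h r hr
      have hss := h s hs
      rw [qeval_cons] at hrr hss
      rw [combo_eval]
      have h1 := mul_le_mul_of_nonneg_left hss ha.le
      have h2 := mul_le_mul_of_nonneg_left hrr (by linarith : (0:ℚ) ≤ -(s.1 0))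
      show r.1 0 * qeval (qtail s) x + -s.1 0 * qeval (qtail r) x
          ≤ (r.1 0 * s.2 + -s.1 0 * r.2) * t
      nlinarith [h1, h2]
    · rw [if_neg hc] at hsome; cases hsome

/- foldr max/min helpers -/
lemma le_foldr_max {l : List ℚ} {a : ℚ} (b : ℚ) (h : a ∈ l) : a ≤ l.foldr max b := by
  induction l with
  | nil => simp at h
  | cons c l ih =>
    rcases List.mem_cons.1 h with rfl | h
    · exact le_max_left _ _
    · exact (ih h).trans (le_max_right _ _)

lemma foldr_max_le {l : List ℚ} {b c : ℚ} (hb : b ≤ c) (h : ∀ a ∈ l, a ≤ c) :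
    l.foldr max b ≤ c := by
  induction l with
  | nil => simpa
  | cons e l ih =>
    simp only [List.foldr_cons]
    exact max_le (h e (List.mem_cons_self)) (ih (fun a ha => h a (List.mem_cons_of_mem _ ha)))

lemma foldr_min_le {l : List ℚ} {a : ℚ} (b : ℚ) (h : a ∈ l) : l.foldr min b ≤ a := by
  induction l with
  | nil => simp at h
  | cons c l ih =>
    rcases List.mem_cons.1 h with rfl | h
    · exact min_le_left _ _
    · exact (min_le_right _ _).trans (ih h)

lemma foldr_min_le_base (l : List ℚ) (b : ℚ) : l.foldr min b ≤ b := by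
  induction l with
  | nil => simp
  | cons c l ih =>
    exact (min_le_right _ _).trans ih

lemma fm_complete {S : List (QRow (d+1))} {x : Fin d → ℚ} {t : ℚ}
    (h : gholds (FMstep S) x t) : ∃ y : ℚ, gholds S (Fin.cons y x) t := by
  classical
  set lbs : List ℚ := S.filterMap
    (fun s => if s.1 0 < 0 then some ((s.2 * t - qeval (qtail s) x) / s.1 0) else none) with hlbs
  set ubs : List ℚ := S.filterMap
    (fun r => if 0 < r.1 0 then some ((r.2 * t - qeval (qtail r) x) / r.1 0) else none) with hubs
  set y : ℚ := lbs.foldr max (ubs.foldr min 0) with hy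
  -- key: every lower bound is ≤ every upper bound
  have hLU : ∀ L ∈ lbs, ∀ U ∈ ubs, L ≤ U := by
    intro L hL U hU
    rcases List.mem_filterMap.1 hL with ⟨s, hsm, hsome⟩
    by_cases hbs : s.1 0 < 0
    · rw [if_pos hbs] at hsome
      cases hsome
      rcases List.mem_filterMap.1 hU with ⟨r, hrm, hsome2⟩
      by_cases har : 0 < r.1 0
      · rw [if_pos har] at hsome2
        cases hsome2
        have hcombo := h _ (List.mem_append.2 (Or.inr (List.mem_flatMap.2 ⟨r, hrm,
          List.mem_filterMap.2 ⟨s, hsm, by rw [if_pos ⟨har, hbs⟩]⟩⟩)))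
        rw [combo_eval] at hcombo
        set a := r.1 0
        set b := s.1 0
        set qs := qeval (qtail s) x
        set qr := qeval (qtail r) x
        have hb0 : b ≠ 0 := ne_of_lt hbs
        have ha0 : a ≠ 0 := ne_of_gt har
        have hbL : ((s.2 * t - qs) / b) * b = s.2 * t - qs := div_mul_cancel₀ _ hb0
        have haU : ((r.2 * t - qr) / a) * a = r.2 * t - qr := div_mul_cancel₀ _ ha0
        set L := (s.2 * t - qs) / b
        set U := (r.2 * t - qr) / a
        have h3 : a * b * (L - U) = a * (s.2 * t - qs) - b * (r.2 * t - qr) := by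
          linear_combination a * hbL - b * haU
        have h4 : 0 ≤ a * (s.2 * t - qs) - b * (r.2 * t - qr) := by
          have : a * qs + (-b) * qr ≤ (a * s.2 + (-b) * r.2) * t := hcombo
          nlinarith [this]
        have hab : a * b < 0 := mul_neg_of_pos_of_neg har hbs
        by_contra hcon
        push_neg at hcon
        have : a * b * (L - U) < 0 := mul_neg_of_neg_of_pos hab (by linarith)
        rw [h3] at this
        linarith
      · rw [if_neg har] at hsome2; cases hsome2
    · rw [if_neg hbs] at hsome; cases hsome
  have hyU : ∀ U ∈ ubs, y ≤ U := by
    intro U hU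
    rw [hy]
    exact foldr_max_le ((foldr_min_le _ hU)) (fun L hL => hLU L hL U hU)
  have hyL : ∀ L ∈ lbs, L ≤ y := fun L hL => le_foldr_max _ hL
  refine ⟨y, ?_⟩
  intro r hr
  rw [qeval_cons]
  rcases lt_trichotomy (r.1 0) 0 with hneg | hzero | hpos
  · have hL : (r.2 * t - qeval (qtail r) x) / r.1 0 ∈ lbs := by
      rw [hlbs]
      exact List.mem_filterMap.2 ⟨r, hr, by rw [if_pos hneg]⟩
    have := hyL _ hL
    have hkey : r.1 0 * y ≤ r.2 * t - qeval (qtail r) x := by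
      have hmul := mul_le_mul_of_nonneg_left this (by linarith : (0:ℚ) ≤ -(r.1 0))
      have hcancel : ((r.2 * t - qeval (qtail r) x) / r.1 0) * r.1 0
          = r.2 * t - qeval (qtail r) x := div_mul_cancel₀ _ (ne_of_lt hneg)
      nlinarith [hmul, hcancel]
    linarith
  · rw [hzero]
    have := h _ (List.mem_append.2 (Or.inl (List.mem_filterMap.2 ⟨r, hr, by rw [if_pos hzero]⟩)))
    simpa [qtail] using this
  · have hU : (r.2 * t - qeval (qtail r) x) / r.1 0 ∈ ubs := by
      rw [hubs]
      exact List.mem_filterMap.2 ⟨r, hr, by rw [if_pos hpos]⟩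
    have := hyU _ hU
    have hkey : r.1 0 * y ≤ r.2 * t - qeval (qtail r) x := by
      have hmul := mul_le_mul_of_nonneg_left this hpos.le
      have hcancel : ((r.2 * t - qeval (qtail r) x) / r.1 0) * r.1 0
          = r.2 * t - qeval (qtail r) x := div_mul_cancel₀ _ (ne_of_gt hpos)
      nlinarith [hmul, hcancel]
    linarith

theorem fm_dichotomy : ∀ (d : ℕ) (S : List (QRow (d+1))),
    (∃ q : Fin (d+1) → ℚ, gholds S q 0 ∧ 1 ≤ q (Fin.last d))
    ∨ (∃ B : ℚ, ∀ x, gholds S x 1 → x (Fin.last d) ≤ B) := by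
  intro d
  induction d with
  | zero =>
    intro S
    by_cases h : ∃ r ∈ S, 0 < r.1 0
    · right
      obtain ⟨r, hr, ha⟩ := h
      refine ⟨r.2 / r.1 0, ?_⟩
      intro x hx
      have := hx r hr
      unfold qeval at this
      rw [Fin.sum_univ_one] at this
      have hlast : Fin.last 0 = (0 : Fin 1) := rfl
      rw [hlast]
      rw [le_div_iff₀ ha]
      linarith [this]
    · left
      push_neg at h
      refine ⟨fun _ => 1, ?_, le_refl _⟩
      intro r hr
      unfold qeval
      rw [Fin.sum_univ_one]
      have := h r hr
      simpa using this
  | succ d ih =>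
    intro S
    rcases ih (FMstep S) with ⟨q', hq', hq'1⟩ | ⟨B, hB⟩
    · left
      obtain ⟨y, hy⟩ := fm_complete hq'
      refine ⟨Fin.cons y q', hy, ?_⟩
      have hlast : Fin.last (d+1) = (Fin.last d).succ := (Fin.succ_last d).symm
      rw [hlast, Fin.cons_succ]
      exact hq'1
    · right
      refine ⟨B, ?_⟩
      intro x hx
      have hx' : gholds (FMstep S) (Fin.tail x) 1 := by
        apply fm_sound (y := x 0)
        rw [Fin.cons_self_tail]
        exact hx
      have := hB _ hx'
      have hlast : Fin.last (d+1) = (Fin.last d).succ := (Fin.succ_last d).symm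
      rw [hlast]
      exact this


/- ==== cell dichotomy ==== -/

def qsys {k : ℕ} (Z : Cell k) : List (QRow k) :=
  (Z.ineqs.map (fun t => (fun i => (t.1 i : ℚ), (t.2 : ℚ))))
  ++ ((List.finRange k).map
      (fun i => ((fun i' => if i' = i then (-1 : ℚ) else 0), (0:ℚ))))

lemma sign_row_eval {k : ℕ} (i : Fin k) (u : Fin k → ℚ) :
    qeval ((fun i' => if i' = i then (-1 : ℚ) else 0), (0:ℚ)) u = -(u i) := by
  unfold qeval
  have : ∀ i' : Fin k, (if i' = i then (-1 : ℚ) else 0) * u i'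
      = if i' = i then -(u i') else 0 := by
    intro i'
    split <;> simp
  rw [Finset.sum_congr rfl (fun i' _ => this i')]
  rw [Finset.sum_ite_eq' Finset.univ i (fun i' => -(u i'))]
  simp

lemma int_row_eval {k : ℕ} (t : Row k) (u : Fin k → ℚ) :
    qeval ((fun i => (t.1 i : ℚ)), (t.2 : ℚ)) u = ∑ i, (t.1 i : ℚ) * u i := rfl

lemma qsys_of_mem {k : ℕ} (Z : Cell k) (x : Fin k → ℕ)
    (hx : ∀ t ∈ Z.ineqs, rhold t x) :
    gholds (qsys Z) (fun i => (x i : ℚ)) 1 := by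
  intro r hr
  rcases List.mem_append.1 hr with h1 | h1
  · rcases List.mem_map.1 h1 with ⟨t, ht, rfl⟩
    rw [int_row_eval]
    have := hx t ht
    unfold rhold at this
    have hcast : ((∑ i, t.1 i * (x i : ℤ) : ℤ) : ℚ) ≤ ((t.2 : ℤ) : ℚ) := by
      exact_mod_cast this
    push_cast at hcast
    simpa using hcast
  · rcases List.mem_map.1 h1 with ⟨i, _, rfl⟩
    rw [sign_row_eval]
    simp

lemma qsys_homog {k : ℕ} (Z : Cell k) (q : Fin k → ℚ) (hq : gholds (qsys Z) q 0) :
    (∀ t ∈ Z.ineqs, ∑ i, (t.1 i : ℚ) * q i ≤ 0) ∧ (∀ i, 0 ≤ q i) := by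
  constructor
  · intro t ht
    have := hq _ (List.mem_append.2 (Or.inl (List.mem_map.2 ⟨t, ht, rfl⟩)))
    rw [int_row_eval] at this
    simpa using this
  · intro i
    have := hq _ (List.mem_append.2 (Or.inr (List.mem_map.2 ⟨i, List.mem_finRange i, rfl⟩)))
    rw [sign_row_eval] at this
    simp at this
    linarith

theorem cell_dichotomy {k : ℕ} (hk : 0 < k) (Z : Cell k) (hwf : Z.WF) :
    (∃ p : Fin k → ℕ, (∀ i, 1 ≤ p i) ∧ ∀ x, Z.Mem x → Z.Mem (fun i => x i + p i))
    ∨ (∃ M : ℕ, ∀ x, Z.Mem x → ∃ i, x i < M) := by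
  classical
  obtain ⟨d, rfl⟩ : ∃ d, k = d + 1 := ⟨k - 1, by omega⟩
  -- permuted system for coordinate i0
  by_cases hb : ∃ i0 : Fin (d+1), ∃ B : ℚ, ∀ x : Fin (d+1) → ℕ,
      (∀ t ∈ Z.ineqs, rhold t x) → (x i0 : ℚ) ≤ B
  · right
    obtain ⟨i0, B, hB⟩ := hb
    refine ⟨⌈B⌉₊ + 1, ?_⟩
    intro x hx
    refine ⟨i0, ?_⟩
    have h1 : (x i0 : ℚ) ≤ B := hB x hx.1
    have h2 : (x i0 : ℚ) ≤ (⌈B⌉₊ : ℚ) := h1.trans (Nat.le_ceil B)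
    have : x i0 ≤ ⌈B⌉₊ := by exact_mod_cast h2
    omega
  · left
    push_neg at hb
    -- for each coordinate, get a homogeneous ray with that coordinate ≥ 1
    have hray : ∀ i0 : Fin (d+1), ∃ q : Fin (d+1) → ℚ,
        (∀ t ∈ Z.ineqs, ∑ i, (t.1 i : ℚ) * q i ≤ 0) ∧ (∀ i, 0 ≤ q i) ∧ 1 ≤ q i0 := by
      intro i0
      set σ : Equiv.Perm (Fin (d+1)) := Equiv.swap i0 (Fin.last d) with hσ
      set Sp : List (QRow (d+1)) := (qsys Z).map (fun r => ((fun i => r.1 (σ i)), r.2)) with hSp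
      have hperm : ∀ (u : Fin (d+1) → ℚ) (t : ℚ),
          gholds Sp u t ↔ gholds (qsys Z) (fun j => u (σ.symm j)) t := by
        intro u t
        constructor
        · intro h r hr
          have := h _ (List.mem_map.2 ⟨r, hr, rfl⟩)
          unfold qeval at this ⊢
          rw [show (∑ i, r.1 i * u (σ.symm i)) = ∑ i, r.1 (σ i) * u (σ.symm (σ i)) from
            (Fintype.sum_equiv σ _ _ (fun i => rfl)).symm]
          simpa using this
        · intro h w hw
          rcases List.mem_map.1 hw with ⟨r, hr, rfl⟩
          have := h r hr
          unfold qeval at this ⊢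
          rw [show (∑ i, r.1 i * u (σ.symm i)) = ∑ i, r.1 (σ i) * u (σ.symm (σ i)) from
            (Fintype.sum_equiv σ _ _ (fun i => rfl)).symm] at this
          simpa using this
      rcases fm_dichotomy d Sp with ⟨q, hq, hq1⟩ | ⟨B, hB⟩
      · have hqs : gholds (qsys Z) (fun j => q (σ.symm j)) 0 := (hperm q 0).1 hq
        obtain ⟨hineq, hsign⟩ := qsys_homog Z _ hqs
        refine ⟨fun j => q (σ.symm j), hineq, hsign, ?_⟩
        have hsy : σ.symm i0 = Fin.last d := by
          rw [hσ, Equiv.symm_swap]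
          exact Equiv.swap_apply_left _ _
        show 1 ≤ q (σ.symm i0)
        rw [hsy]
        exact hq1
      · exfalso
        obtain ⟨x, hx, hgt⟩ := hb i0 B
        have hq1 : gholds (qsys Z) (fun i => (x i : ℚ)) 1 := qsys_of_mem Z x hx
        have hq2 : gholds Sp (fun j => (x (σ j) : ℚ)) 1 := by
          rw [hperm]
          intro r hr
          have := hq1 r hr
          unfold qeval at this ⊢
          simp only [Equiv.apply_symm_apply]
          exact this
        have h3 := hB _ hq2
        have hσl : σ (Fin.last d) = i0 := by
          rw [hσ]; exact Equiv.swap_apply_right _ _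
        simp only [hσl] at h3
        exact absurd h3 (not_le.2 hgt)
    -- combine rays
    choose qf hqf1 hqf2 hqf3 using hray
    set qq : Fin (d+1) → ℚ := fun j => ∑ i0, qf i0 j with hqq
    have hqq0 : ∀ j, 1 ≤ qq j := by
      intro j
      show (1:ℚ) ≤ ∑ i0, qf i0 j
      calc (1:ℚ) ≤ qf j j := hqf3 j
      _ ≤ ∑ i0, qf i0 j := Finset.single_le_sum (fun i0 _ => hqf2 i0 j) (Finset.mem_univ j)
    have hqqineq : ∀ t ∈ Z.ineqs, ∑ i, (t.1 i : ℚ) * qq i ≤ 0 := by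
      intro t ht
      show ∑ i, (t.1 i : ℚ) * (∑ i0, qf i0 i) ≤ 0
      have : ∑ i, (t.1 i : ℚ) * (∑ i0, qf i0 i) = ∑ i0, ∑ i, (t.1 i : ℚ) * qf i0 i := by
        rw [Finset.sum_comm]
        congr 1
        ext i
        rw [Finset.mul_sum]
      rw [this]
      exact Finset.sum_nonpos (fun i0 _ => hqf1 i0 t ht)
    -- rationalize
    set N : ℕ := ∏ j, (qq j).den with hN
    have hNpos : 0 < N := Finset.prod_pos (fun j _ => (qq j).pos)
    have hden : ∀ j, ((qq j).den : ℚ) * ((N / (qq j).den : ℕ) : ℚ) = (N : ℚ) := by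
      intro j
      have hdvd : (qq j).den ∣ N := Finset.dvd_prod_of_mem _ (Finset.mem_univ j)
      have h2 : ((qq j).den : ℚ) * ((N / (qq j).den : ℕ) : ℚ)
          = (((qq j).den * (N / (qq j).den) : ℕ) : ℚ) := by push_cast; ring
      rw [h2, Nat.mul_div_cancel' hdvd]
    set z : Fin (d+1) → ℤ := fun j => (qq j).num * ((N / (qq j).den : ℕ) : ℤ) with hz
    have hzq : ∀ j, ((z j : ℚ)) = qq j * N := by
      intro j
      have hd0 : ((qq j).den : ℚ) ≠ 0 := by
        exact_mod_cast (qq j).pos.ne'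
      have hnum : ((qq j).num : ℚ) = qq j * (qq j).den := by
        have h2 : ((qq j).num : ℚ) / ((qq j).den : ℚ) * ((qq j).den:ℚ)
            = qq j * ((qq j).den:ℚ) := by rw [Rat.num_div_den]
        rwa [div_mul_cancel₀ _ hd0] at h2
      show (((qq j).num * ((N / (qq j).den : ℕ) : ℤ) : ℤ) : ℚ) = qq j * N
      push_cast
      rw [hnum, ← hden j]
      norm_cast
      push_cast
      ring
    have hz1 : ∀ j, 1 ≤ z j := by
      intro j
      have : (1 : ℚ) ≤ (z j : ℚ) := by
        rw [hzq j]
        have h1 : (1:ℚ) ≤ qq j := hqq0 j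
        have h2 : (1:ℚ) ≤ (N:ℚ) := by exact_mod_cast hNpos
        nlinarith
      exact_mod_cast this
    have hzineq : ∀ t ∈ Z.ineqs, (∑ i, t.1 i * z i) ≤ 0 := by
      intro t ht
      have hc : ((∑ i, t.1 i * z i : ℤ) : ℚ) = ∑ i, (t.1 i : ℚ) * ((z i : ℚ)) := by
        push_cast
        rfl
      have : ((∑ i, t.1 i * z i : ℤ) : ℚ) ≤ 0 := by
        rw [hc]
        have : ∑ i, (t.1 i : ℚ) * ((z i : ℚ)) = (N : ℚ) * ∑ i, (t.1 i : ℚ) * qq i := by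
          rw [Finset.mul_sum]
          exact Finset.sum_congr rfl (fun i _ => by rw [hzq i]; ring)
        rw [this]
        have hN0 : (0:ℚ) ≤ (N:ℚ) := by positivity
        exact mul_nonpos_of_nonneg_of_nonpos hN0 (hqqineq t ht)
      exact_mod_cast this
    -- multiply by lcm of moduli
    set L : ℕ := (Z.congs.map (fun c => c.D)).foldr Nat.lcm 1 with hL
    have hLpos : 0 < L := foldr_lcm_pos (by
      intro a ha
      rcases List.mem_map.1 ha with ⟨c, hc, rfl⟩
      exact hwf c hc)
    set p : Fin (d+1) → ℕ := fun j => (z j).toNat * L with hp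
    have hpz : ∀ j, (p j : ℤ) = z j * L := by
      intro j
      rw [hp]
      push_cast
      rw [Int.toNat_of_nonneg (by linarith [hz1 j])]
    refine ⟨p, ?_, ?_⟩
    · intro i
      have h1 := hz1 i
      have h2 : 1 ≤ (z i).toNat := by omega
      show 1 ≤ (z i).toNat * L
      exact Nat.one_le_iff_ne_zero.2 (Nat.mul_ne_zero (by omega) (by omega))
    · intro x hx
      constructor
      · intro t ht
        unfold rhold
        have hsplit : ∑ i, t.1 i * ((x i + p i : ℕ) : ℤ)
            = (∑ i, t.1 i * (x i : ℤ)) + ∑ i, t.1 i * (p i : ℤ) := by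
          push_cast
          rw [← Finset.sum_add_distrib]
          exact Finset.sum_congr rfl (fun i _ => by ring)
        rw [hsplit]
        have hsum : ∑ i, t.1 i * (p i : ℤ) = (L : ℤ) * ∑ i, t.1 i * z i := by
          rw [Finset.mul_sum]
          exact Finset.sum_congr rfl (fun i _ => by rw [hpz i]; ring)
        have h2 : ∑ i, t.1 i * (p i : ℤ) ≤ 0 := by
          rw [hsum]
          exact mul_nonpos_of_nonneg_of_nonpos (by positivity) (hzineq t ht)
        have h3 := hx.1 t ht
        unfold rhold at h3
        omega
      · intro t ht
        unfold chold
        have hsplit : ∑ i, t.g i * ((x i + p i : ℕ) : ℤ)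
            = (∑ i, t.g i * (x i : ℤ)) + ∑ i, t.g i * (p i : ℤ) := by
          push_cast
          rw [← Finset.sum_add_distrib]
          exact Finset.sum_congr rfl (fun i _ => by ring)
        have hkey : (∑ i, t.g i * ((x i + p i : ℕ) : ℤ)) - t.e
            = ((∑ i, t.g i * (x i : ℤ)) - t.e) + ∑ i, t.g i * (p i : ℤ) := by
          rw [hsplit]; ring
        rw [hkey]
        apply dvd_add (hx.2 t ht)
        have hsum : ∑ i, t.g i * (p i : ℤ) = (L : ℤ) * ∑ i, t.g i * z i := by
          rw [Finset.mul_sum]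
          exact Finset.sum_congr rfl (fun i _ => by rw [hpz i]; ring)
        rw [hsum]
        have hDL : (t.D : ℤ) ∣ (L : ℤ) := by
          exact_mod_cast dvd_foldr_lcm (List.mem_map.2 ⟨t, ht, rfl⟩)
        exact hDL.mul_right _


/- ==== projection of cell unions ==== -/

lemma cu_proj (U : CU (d+1)) (hwf : CU.WF U) :
    ∃ U' : CU d, CU.WF U' ∧ ∀ x : Fin d → ℕ,
      CU.Mem U' x ↔ ∃ y : ℕ, CU.Mem U (Fin.snoc x y) := by
  induction U with
  | nil =>
    refine ⟨[], by intro Z hZ; simp at hZ, ?_⟩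
    intro x
    constructor
    · rintro ⟨Z, hZ, -⟩; simp at hZ
    · rintro ⟨y, Z, hZ, -⟩; simp at hZ
  | cons Z U ih =>
    obtain ⟨Uz, hUzwf, hUz⟩ := cooper Z (hwf Z (List.mem_cons_self))
    obtain ⟨U', hU'wf, hU'⟩ := ih (fun W hW => hwf W (List.mem_cons_of_mem _ hW))
    refine ⟨Uz ++ U', ?_, ?_⟩
    · intro W hW
      rcases List.mem_append.1 hW with h | h
      · exact hUzwf W h
      · exact hU'wf W h
    · intro x
      constructor
      · rintro ⟨W, hW, hm⟩
        rcases List.mem_append.1 hW with h | h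
        · obtain ⟨y, hy⟩ := (hUz x).1 ⟨W, h, hm⟩
          exact ⟨y, Z, List.mem_cons_self, hy⟩
        · obtain ⟨y, W', hW', hm'⟩ := (hU' x).1 ⟨W, h, hm⟩
          exact ⟨y, W', List.mem_cons_of_mem _ hW', hm'⟩
      · rintro ⟨y, W, hW, hm⟩
        rcases List.mem_cons.1 hW with rfl | hW'
        · obtain ⟨C, hC, hCm⟩ := (hUz x).2 ⟨y, hm⟩
          exact ⟨C, List.mem_append.2 (Or.inl hC), hCm⟩
        · obtain ⟨C, hC, hCm⟩ := (hU' x).2 ⟨y, W, hW', hm⟩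
          exact ⟨C, List.mem_append.2 (Or.inr hC), hCm⟩

/- iterated projection -/
def projIter {k : ℕ} : (l : ℕ) → ((Fin (k + l) → ℕ) → Prop) → ((Fin k → ℕ) → Prop)
  | 0, S => S
  | l+1, S => projIter l (fun z => ∃ y : ℕ, S (Fin.snoc z y))

lemma projIter_congr {k : ℕ} : ∀ (l : ℕ) (S S' : (Fin (k + l) → ℕ) → Prop),
    (∀ z, S z ↔ S' z) → ∀ x, projIter l S x ↔ projIter l S' x := by
  intro l
  induction l with
  | zero => intro S S' h x; exact h x
  | succ l ih =>
    intro S S' h x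
    exact ih _ _ (fun z => exists_congr (fun y => h _)) x

lemma projIter_exists {k : ℕ} : ∀ (l : ℕ) {α : Type} (W : α → (Fin (k + l) → ℕ) → Prop) (x),
    projIter l (fun z => ∃ y : α, W y z) x ↔ ∃ y : α, projIter l (W y) x := by
  intro l
  induction l with
  | zero => intro α W x; rfl
  | succ l ih =>
    intro α W x
    unfold projIter
    rw [projIter_congr l _ (fun z => ∃ y : α, ∃ y' : ℕ, W y (Fin.snoc z y'))
      (fun z => exists_comm) x]
    exact ih _ x

lemma projIter_cu {k : ℕ} : ∀ (l : ℕ) (S : (Fin (k + l) → ℕ) → Prop),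
    (∃ U : CU (k + l), CU.WF U ∧ ∀ z, CU.Mem U z ↔ S z) →
    ∃ U : CU k, CU.WF U ∧ ∀ x, CU.Mem U x ↔ projIter l S x := by
  intro l
  induction l with
  | zero => intro S h; exact h
  | succ l ih =>
    rintro S ⟨U, hwf, hU⟩
    obtain ⟨U', hwf', hU'⟩ := cu_proj U hwf
    apply ih
    refine ⟨U', hwf', ?_⟩
    intro z
    rw [hU' z]
    exact exists_congr (fun y => hU _)

/- the coset condition as a predicate on Fin (k+l) → ℕ -/
def cosetCond (k l : ℕ) (b : Fin k → ℕ) (per : Fin l → Fin k → ℕ) : (Fin (k + l) → ℕ) → Prop :=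
  fun z => ∀ j : Fin k, z (Fin.castAdd l j) = b j + ∑ i : Fin l, z (Fin.natAdd k i) * per i j

/- the basic equality cell -/
def cosetCell (k l : ℕ) (b : Fin k → ℕ) (per : Fin l → Fin k → ℕ) : Cell (k + l) :=
  ⟨(List.finRange k).flatMap (fun j =>
    [(Fin.addCases (fun j' => if j' = j then 1 else 0) (fun i => -(per i j : ℤ)), (b j : ℤ)),
     (Fin.addCases (fun j' => if j' = j then -1 else 0) (fun i => (per i j : ℤ)), -(b j : ℤ))]),
   []⟩

lemma cosetCell_row_sum (k l : ℕ) (b : Fin k → ℕ) (per : Fin l → Fin k → ℕ)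
    (j : Fin k) (z : Fin (k + l) → ℕ) :
    (∑ i : Fin (k+l), (Fin.addCases (motive := fun _ => ℤ)
        (fun j' => if j' = j then 1 else 0) (fun i => -(per i j : ℤ)) i) * (z i : ℤ))
      = (z (Fin.castAdd l j) : ℤ) - ∑ i : Fin l, (per i j : ℤ) * (z (Fin.natAdd k i) : ℤ) := by
  rw [Fin.sum_univ_add]
  congr 1
  · have : ∀ j' : Fin k, (Fin.addCases (motive := fun _ => ℤ)
        (fun j' => if j' = j then 1 else 0) (fun i => -(per i j : ℤ)) (Fin.castAdd l j'))
          * (z (Fin.castAdd l j') : ℤ)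
        = if j' = j then (z (Fin.castAdd l j') : ℤ) else 0 := by
      intro j'
      rw [Fin.addCases_left]
      split <;> simp
    rw [Finset.sum_congr rfl (fun j' _ => this j')]
    rw [Finset.sum_ite_eq' Finset.univ j (fun j' => (z (Fin.castAdd l j') : ℤ))]
    simp
  · rw [← Finset.sum_neg_distrib]
    apply Finset.sum_congr rfl
    intro i _
    rw [Fin.addCases_right]
    ring

lemma cosetCell_row_sum_neg (k l : ℕ) (b : Fin k → ℕ) (per : Fin l → Fin k → ℕ)
    (j : Fin k) (z : Fin (k + l) → ℕ) :
    (∑ i : Fin (k+l), (Fin.addCases (motive := fun _ => ℤ)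
        (fun j' => if j' = j then -1 else 0) (fun i => (per i j : ℤ)) i) * (z i : ℤ))
      = -(z (Fin.castAdd l j) : ℤ) + ∑ i : Fin l, (per i j : ℤ) * (z (Fin.natAdd k i) : ℤ) := by
  rw [Fin.sum_univ_add]
  congr 1
  · have : ∀ j' : Fin k, (Fin.addCases (motive := fun _ => ℤ)
        (fun j' => if j' = j then -1 else 0) (fun i => (per i j : ℤ)) (Fin.castAdd l j'))
          * (z (Fin.castAdd l j') : ℤ)
        = if j' = j then -(z (Fin.castAdd l j') : ℤ) else 0 := by
      intro j'
      rw [Fin.addCases_left]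
      split <;> simp
    rw [Finset.sum_congr rfl (fun j' _ => this j')]
    rw [Finset.sum_ite_eq' Finset.univ j (fun j' => -(z (Fin.castAdd l j') : ℤ))]
    simp
  · apply Finset.sum_congr rfl
    intro i _
    rw [Fin.addCases_right]

lemma cosetCell_mem (k l : ℕ) (b : Fin k → ℕ) (per : Fin l → Fin k → ℕ) (z : Fin (k+l) → ℕ) :
    (cosetCell k l b per).Mem z ↔ cosetCond k l b per z := by
  unfold Cell.Mem cosetCell cosetCond
  constructor
  · rintro ⟨hi, -⟩
    intro j
    have h1 := hi _ (List.mem_flatMap.2 ⟨j, List.mem_finRange j, List.mem_cons_self⟩)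
    have h2 := hi _ (List.mem_flatMap.2 ⟨j, List.mem_finRange j,
      List.mem_cons_of_mem _ (List.mem_cons_self)⟩)
    unfold rhold at h1 h2
    rw [cosetCell_row_sum k l b per j z] at h1
    rw [cosetCell_row_sum_neg k l b per j z] at h2
    have hsum : ((∑ i : Fin l, z (Fin.natAdd k i) * per i j : ℕ) : ℤ)
        = ∑ i : Fin l, (per i j : ℤ) * (z (Fin.natAdd k i) : ℤ) := by
      push_cast
      exact Finset.sum_congr rfl (fun i _ => by ring)
    omega
  · intro h
    refine ⟨?_, by simp⟩
    intro t ht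
    rcases List.mem_flatMap.1 ht with ⟨j, -, hmem⟩
    have hj := h j
    have hsum : ((∑ i : Fin l, z (Fin.natAdd k i) * per i j : ℕ) : ℤ)
        = ∑ i : Fin l, (per i j : ℤ) * (z (Fin.natAdd k i) : ℤ) := by
      push_cast
      exact Finset.sum_congr rfl (fun i _ => by ring)
    rcases List.mem_cons.1 hmem with rfl | hmem2
    · unfold rhold
      rw [cosetCell_row_sum k l b per j z]
      omega
    · rcases List.mem_cons.1 hmem2 with rfl | hmem3
      · unfold rhold
        rw [cosetCell_row_sum_neg k l b per j z]
        omega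
      · simp at hmem3

/- peeling one variable from the coset condition -/
lemma cosetCond_snoc (k l : ℕ) (b : Fin k → ℕ) (per : Fin (l+1) → Fin k → ℕ)
    (z : Fin (k + l) → ℕ) (y : ℕ) :
    cosetCond k (l+1) b per (Fin.snoc z y) ↔
      cosetCond k l (fun j => b j + y * per (Fin.last l) j) (fun i => per i.castSucc) z := by
  unfold cosetCond
  apply forall_congr'
  intro j
  have e1 : Fin.castAdd (l+1) j = (Fin.castAdd l j).castSucc := by
    apply Fin.ext; rfl
  have e2 : (Fin.snoc z y : Fin (k+l+1) → ℕ) (Fin.castAdd (l+1) j) = z (Fin.castAdd l j) := by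
    rw [e1, Fin.snoc_castSucc]
  rw [e2]
  have e3 : ∑ i : Fin (l+1), (Fin.snoc z y : Fin (k+l+1) → ℕ) (Fin.natAdd k i) * per i j
      = (∑ i : Fin l, z (Fin.natAdd k i) * per i.castSucc j) + y * per (Fin.last l) j := by
    rw [Fin.sum_univ_castSucc]
    congr 1
    · apply Finset.sum_congr rfl
      intro i _
      congr 1
      rw [Fin.natAdd_castSucc, Fin.snoc_castSucc]
    · congr 1
      have e4 : Fin.natAdd k (Fin.last l) = Fin.last (k + l) := by
        apply Fin.ext; simp [Fin.natAdd, Fin.last]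
      rw [e4, Fin.snoc_last]
  rw [e3]
  beta_reduce
  omega

/- main: coset = union of cells -/
theorem coset_cells (k l : ℕ) (b : Fin k → ℕ) (per : Fin l → Fin k → ℕ) :
    ∃ U : CU k, CU.WF U ∧ ∀ x : Fin k → ℕ,
      CU.Mem U x ↔ ∃ n : Fin l → ℕ, ∀ j, x j = b j + ∑ i, n i * per i j := by
  have main : ∀ (l : ℕ) (per : Fin l → Fin k → ℕ) (b : Fin k → ℕ) (x : Fin k → ℕ),
      projIter l (cosetCond k l b per) x ↔
        ∃ n : Fin l → ℕ, ∀ j, x j = b j + ∑ i, n i * per i j := by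
    intro l
    induction l with
    | zero =>
      intro per b x
      show cosetCond k 0 b per x ↔ _
      unfold cosetCond
      constructor
      · intro h
        refine ⟨fun i => 0, ?_⟩
        intro j
        have := h j
        have e : Fin.castAdd 0 j = j := by apply Fin.ext; rfl
        rw [e] at this
        simpa using this
      · rintro ⟨n, hn⟩
        intro j
        have := hn j
        have e : Fin.castAdd 0 j = j := by apply Fin.ext; rfl
        rw [e]
        simpa using this
    | succ l ih =>
      intro per b x
      show projIter l (fun z => ∃ y : ℕ, cosetCond k (l+1) b per (Fin.snoc z y)) x ↔ _
      rw [projIter_congr l _ (fun z => ∃ y : ℕ,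
        cosetCond k l (fun j => b j + y * per (Fin.last l) j) (fun i => per i.castSucc) z)
        (fun z => exists_congr (fun y => cosetCond_snoc k l b per z y)) x]
      rw [projIter_exists l _ x]
      constructor
      · rintro ⟨y, hy⟩
        rw [ih _ _ x] at hy
        obtain ⟨n', hn'⟩ := hy
        refine ⟨Fin.snoc n' y, ?_⟩
        intro j
        have := hn' j
        rw [Fin.sum_univ_castSucc]
        simp only [Fin.snoc_castSucc, Fin.snoc_last]
        omega
      · rintro ⟨n, hn⟩
        refine ⟨n (Fin.last l), ?_⟩
        rw [ih _ _ x]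
        refine ⟨fun i => n i.castSucc, ?_⟩
        intro j
        have := hn j
        rw [Fin.sum_univ_castSucc] at this
        beta_reduce
        omega
  obtain ⟨U, hwf, hU⟩ := projIter_cu l (cosetCond k l b per)
    ⟨[cosetCell k l b per], by
      intro Z hZ
      rcases List.mem_singleton.1 hZ with rfl
      intro t ht
      simp [cosetCell] at ht, by
      intro z
      constructor
      · rintro ⟨Z, hZ, hm⟩
        rcases List.mem_singleton.1 hZ with rfl
        exact (cosetCell_mem k l b per z).1 hm
      · intro h
        exact ⟨_, List.mem_singleton.2 rfl, (cosetCell_mem k l b per z).2 h⟩⟩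
  refine ⟨U, hwf, ?_⟩
  intro x
  rw [hU x, main l per b x]


end SLP
namespace SLP

lemma list_bound {k : ℕ} (L : CU k) (h : ∀ Z ∈ L, ∃ M : ℕ, ∀ x, Z.Mem x → ∃ i, x i < M) :
    ∃ M : ℕ, ∀ Z ∈ L, ∀ x, Z.Mem x → ∃ i, x i < M := by
  induction L with
  | nil => exact ⟨0, by simp⟩
  | cons Z L ih =>
    obtain ⟨M1, hM1⟩ := h Z (List.mem_cons_self)
    obtain ⟨M2, hM2⟩ := ih (fun W hW => h W (List.mem_cons_of_mem _ hW))
    refine ⟨max M1 M2, ?_⟩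
    intro W hW x hx
    rcases List.mem_cons.1 hW with rfl | hW
    · obtain ⟨i, hi⟩ := hM1 x hx
      exact ⟨i, lt_of_lt_of_le hi (le_max_left _ _)⟩
    · obtain ⟨i, hi⟩ := hM2 W hW x hx
      exact ⟨i, lt_of_lt_of_le hi (le_max_right _ _)⟩

lemma coset_mem_iff {k l : ℕ} (b : Fin k → ℕ) (per : Fin l → Fin k → ℕ) (x : Fin k → ℕ) :
    (∃ n : Fin l → ℕ, x = b + ∑ i, n i • per i) ↔
      ∃ n : Fin l → ℕ, ∀ j, x j = b j + ∑ i, n i * per i j := by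
  apply exists_congr
  intro n
  constructor
  · intro h j
    rw [h]
    simp [Finset.sum_apply]
  · intro h
    funext j
    rw [h j]
    simp [Finset.sum_apply]

lemma dense_of_ray {k : ℕ} (hk : 0 < k) (a q : Fin k → ℕ) (hq : ∀ i, 1 ≤ q i) :
    ∃ α : ℝ, 0 < α ∧ ∀ t : ℕ, 1 ≤ t → AlphaDense α (fun i => a i + t * q i) := by
  set C : ℕ := (∑ j, a j) + ∑ j, q j with hC
  have huniv : (Finset.univ : Finset (Fin k)).Nonempty := ⟨⟨0, hk⟩, Finset.mem_univ _⟩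
  have hqsum : 0 < ∑ j, q j := Finset.sum_pos (fun j _ => hq j) huniv
  have hCpos : 0 < C := by omega
  have hCr : (0:ℝ) < (C:ℝ) := by exact_mod_cast hCpos
  refine ⟨1 / (C:ℝ), by positivity, ?_⟩
  intro t ht i _
  show (1 / (C:ℝ)) * (∑ j, (((a j + t * q j : ℕ)) : ℝ)) ≤ ((a i + t * q i : ℕ) : ℝ)
  have hsumN : (∑ j, (a j + t * q j)) ≤ t * C := by
    have h1 : (∑ j, (a j + t * q j)) = (∑ j, a j) + t * ∑ j, q j := by
      rw [Finset.sum_add_distrib, Finset.mul_sum]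
    have h2 : (∑ j, a j) ≤ t * ∑ j, a j := Nat.le_mul_of_pos_left _ ht
    rw [h1, hC, Nat.mul_add]
    omega
  have hti : t ≤ a i + t * q i := by
    have h3 : t * 1 ≤ t * q i := Nat.mul_le_mul_left t (hq i)
    omega
  have hs2 : (∑ j, ((a j + t * q j : ℕ) : ℝ)) ≤ (t:ℝ) * (C:ℝ) := by
    have hcast : (∑ j, ((a j + t * q j : ℕ) : ℝ)) = ((∑ j, (a j + t * q j) : ℕ) : ℝ) := by
      push_cast
      rfl
    rw [hcast]
    exact_mod_cast hsumN
  have ht2 : (t:ℝ) ≤ ((a i + t * q i : ℕ) : ℝ) := by exact_mod_cast hti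
  rw [div_mul_eq_mul_div, one_mul, div_le_iff₀ hCr]
  have h4 := mul_le_mul_of_nonneg_right ht2 hCr.le
  linarith

lemma ray_infinite {k : ℕ} (hk : 0 < k) (a q : Fin k → ℕ) (hq : ∀ i, 1 ≤ q i)
    {S : Set (Fin k → ℕ)} (hmem : ∀ t : ℕ, 1 ≤ t → (fun i => a i + t * q i) ∈ S) :
    S.Infinite := by
  refine Set.infinite_of_injective_forall_mem
    (f := fun t : ℕ => (fun i => a i + (t+1) * q i : Fin k → ℕ)) ?_ ?_
  · intro s t hst
    have h1 := congrFun hst ⟨0, hk⟩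
    simp only at h1
    have hq0 : 0 < q ⟨0, hk⟩ := hq _
    have h2 : (s+1) * q ⟨0,hk⟩ = (t+1) * q ⟨0,hk⟩ := by omega
    have h3 := Nat.eq_of_mul_eq_mul_right hq0 h2
    omega
  · intro t
    exact hmem (t+1) (by omega)

lemma alphaDense_mono {k : ℕ} {α β : ℝ} (h : β ≤ α) (hβ : 0 ≤ β) {c : Fin k → ℕ}
    (hc : AlphaDense α c) : AlphaDense β c := by
  intro i hi
  have h1 := hc i hi
  have hs : (0:ℝ) ≤ ∑ j, (c j : ℝ) := Finset.sum_nonneg (fun j _ => by positivity)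
  nlinarith

end SLP

theorem stmt7 {k : ℕ} (φ : (Fin k → ℕ) → Bool)
    (hsemi : Semilinear {m | φ m = true})
    (hdac : ∀ α : ℝ, 0 < α → AlmostConstantOn φ {m | AlphaDense α m}) :
    EventuallyConstantPred φ := by
  classical
  rcases Nat.eq_zero_or_pos k with rfl | hk
  · refine ⟨0, fun m m' _ _ => ?_⟩
    have : m = m' := funext (fun i => i.elim0)
    rw [this]
  obtain ⟨m, P, hPc, hX⟩ := hsemi
  choose base len per hP using hPc
  have hmem : ∀ x : Fin k → ℕ, φ x = true ↔ ∃ j : Fin m, ∃ n : Fin (len j) → ℕ,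
      ∀ j', x j' = base j j' + ∑ i, n i * per j i j' := by
    intro x
    have h1 : (φ x = true) ↔ x ∈ {m | φ m = true} := Iff.rfl
    rw [h1, hX, Set.mem_iUnion]
    apply exists_congr
    intro j
    rw [hP j]
    exact SLP.coset_mem_iff (base j) (per j) x
  by_cases hbig : ∀ M : ℕ, ∃ x : Fin k → ℕ, φ x = true ∧ ∀ i, M ≤ x i
  · set Mstar : ℕ := (Finset.univ.sup (fun j : Fin m => Finset.univ.sup (fun i => base j i))) + 1
      with hMstar
    obtain ⟨xb, hxbT, hxbGe⟩ := hbig Mstar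
    obtain ⟨j0, n, hn⟩ := (hmem xb).1 hxbT
    set q : Fin k → ℕ := fun j' => ∑ i, n i * per j0 i j' with hqdef
    have hbase_lt : ∀ j', base j0 j' < Mstar := by
      intro j'
      have h1 : base j0 j' ≤ Finset.univ.sup (fun i => base j0 i) :=
        Finset.le_sup (Finset.mem_univ j')
      have h2 : Finset.univ.sup (fun i => base j0 i)
          ≤ Finset.univ.sup (fun j : Fin m => Finset.univ.sup (fun i => base j i)) :=
        Finset.le_sup (f := fun j : Fin m => Finset.univ.sup (fun i => base j i))
          (Finset.mem_univ j0)
      omega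
    have hqpos : ∀ j', 1 ≤ q j' := by
      intro j'
      have ha := hn j'
      have hb := hxbGe j'
      have hc := hbase_lt j'
      show 1 ≤ ∑ i, n i * per j0 i j'
      omega
    have hrayT : ∀ t : ℕ, φ (fun j' => base j0 j' + t * q j') = true := by
      intro t
      rw [hmem]
      refine ⟨j0, fun i => t * n i, ?_⟩
      intro j'
      show base j0 j' + t * q j' = base j0 j' + ∑ i, (t * n i) * per j0 i j'
      have hsum : ∑ i, (t * n i) * per j0 i j' = t * ∑ i, n i * per j0 i j' := by
        rw [Finset.mul_sum]
        exact Finset.sum_congr rfl (fun i _ => by ring)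
      rw [hsum]
    obtain ⟨α1, hα1pos, hα1dense⟩ := SLP.dense_of_ray hk (base j0) q hqpos
    have htrueInf : {m ∈ {m | AlphaDense α1 m} | φ m = true}.Infinite := by
      apply SLP.ray_infinite hk (base j0) q hqpos
      intro t ht
      exact ⟨hα1dense t ht, hrayT t⟩
    have hfalse1 : {m ∈ {m | AlphaDense α1 m} | φ m = false}.Finite := by
      rcases hdac α1 hα1pos with h | h
      · exact h
      · exact absurd h htrueInf
    have densefalse : ∀ α : ℝ, 0 < α → {m ∈ {m | AlphaDense α m} | φ m = false}.Finite := by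
      intro α hα
      rcases hdac α hα with h | h
      · exact h
      · rcases le_or_gt α1 α with hle | hlt
        · apply hfalse1.subset
          rintro x ⟨hx1, hx2⟩
          exact ⟨SLP.alphaDense_mono hle hα1pos.le hx1, hx2⟩
        · exfalso
          have hInf : {m ∈ {m | AlphaDense α m} | φ m = true}.Infinite := by
            apply SLP.ray_infinite hk (base j0) q hqpos
            intro t ht
            exact ⟨SLP.alphaDense_mono hlt.le hα.le (hα1dense t ht), hrayT t⟩
          exact hInf h
    have hmemcells : ∀ j : Fin m, ∃ U : SLP.CU k, SLP.CU.WF U ∧ ∀ x, SLP.CU.Mem U x ↔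
        (∃ n : Fin (len j) → ℕ, ∀ j', x j' = base j j' + ∑ i, n i * per j i j') :=
      fun j => SLP.coset_cells k (len j) (base j) (per j)
    choose Uj hUjwf hUj using hmemcells
    set UX : SLP.CU k := (List.finRange m).flatMap Uj with hUX
    have hUXwf : SLP.CU.WF UX := by
      intro Z hZ
      rcases List.mem_flatMap.1 hZ with ⟨j, -, hZ2⟩
      exact hUjwf j Z hZ2
    have hUXmem : ∀ x, SLP.CU.Mem UX x ↔ φ x = true := by
      intro x
      rw [hmem x]
      constructor
      · rintro ⟨Z, hZ, hm⟩
        rcases List.mem_flatMap.1 hZ with ⟨j, -, hZ2⟩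
        exact ⟨j, (hUj j x).1 ⟨Z, hZ2, hm⟩⟩
      · rintro ⟨j, hj⟩
        obtain ⟨Z, hZ, hm⟩ := (hUj j x).2 hj
        exact ⟨Z, List.mem_flatMap.2 ⟨j, List.mem_finRange j, hZ⟩, hm⟩
    set UC : SLP.CU k := SLP.CU.compl UX with hUC
    have hUCwf : SLP.CU.WF UC := SLP.CU.compl_wf hUXwf
    have hUCmem : ∀ x, SLP.CU.Mem UC x ↔ φ x = false := by
      intro x
      rw [hUC, SLP.CU.compl_mem hUXwf, hUXmem]
      simp [Bool.not_eq_true]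
    have hbound : ∀ Z ∈ UC, ∃ M : ℕ, ∀ x, Z.Mem x → ∃ i, x i < M := by
      intro Z hZ
      rcases SLP.cell_dichotomy hk Z (hUCwf Z hZ) with ⟨p, hp1, hpump⟩ | hB
      · by_cases hne : ∃ x0, Z.Mem x0
        · exfalso
          obtain ⟨x0, hx0⟩ := hne
          have hineZ : ∀ t : ℕ, Z.Mem (fun i => x0 i + t * p i) := by
            intro t
            induction t with
            | zero =>
              have heq : (fun i => x0 i + 0 * p i) = x0 := by
                funext i; omega
              rwa [heq]
            | succ t iht =>
              have h5 := hpump _ iht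
              have heq : (fun i => (fun i => x0 i + t * p i) i + p i)
                  = (fun i => x0 i + (t+1) * p i) := by
                funext i
                show x0 i + t * p i + p i = x0 i + (t+1) * p i
                ring
              rwa [heq] at h5
          obtain ⟨α2, hα2pos, hα2dense⟩ := SLP.dense_of_ray hk x0 p hp1
          have hInf : {m ∈ {m | AlphaDense α2 m} | φ m = false}.Infinite := by
            apply SLP.ray_infinite hk x0 p hp1
            intro t ht
            refine ⟨hα2dense t ht, ?_⟩
            rw [← hUCmem]
            exact ⟨Z, hZ, hineZ t⟩
          exact hInf (densefalse α2 hα2pos)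
        · push_neg at hne
          exact ⟨0, fun x hx => absurd hx (hne x)⟩
      · exact hB
    obtain ⟨M, hM⟩ := SLP.list_bound UC hbound
    have hall : ∀ x : Fin k → ℕ, (∀ i, M ≤ x i) → φ x = true := by
      intro x hxge
      by_contra hneq
      rw [Bool.not_eq_true] at hneq
      obtain ⟨Z, hZ, hm⟩ := (hUCmem x).2 hneq
      obtain ⟨i, hi⟩ := hM Z hZ x hm
      exact absurd (hxge i) (by omega)
    refine ⟨M, ?_⟩
    intro m1 m2 h1 h2
    rw [hall m1 h1, hall m2 h2]
  · push_neg at hbig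
    obtain ⟨M, hM⟩ := hbig
    have hf : ∀ x : Fin k → ℕ, (∀ i, M ≤ x i) → φ x = false := by
      intro x hx
      rcases Bool.eq_false_or_eq_true (φ x) with h | h
      · obtain ⟨i, hi⟩ := hM x h
        exact absurd (hx i) (by omega)
      · exact h
    refine ⟨M, ?_⟩
    intro m1 m2 h1 h2
    rw [hf m1 h1, hf m2 h2]
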